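/- Let V be a finite set, E ⊆ V×V, and fix μ with support condition Q^μ(y,z) = μ(y)r(y,z). Suppose Q* minimizes Q ↦ ∑_{(y,z)∈E} Φ(Q(y,z), Q^μ(y,z)) over divergence-free nonnegative flows, and suppose Q*(y,z) > 0 on all edges of a self-avoiding cycle C. Then ∑_{(v,w)∈C} log(Q*(v,w)/(μ(v)r(v,w))) = 0. -/

import Mathlib

open scoped ENNReal

/-- The extended rate function `Φ`: `Φ(q,p) = q log(q/p) - (q-p)` for `q,p > 0`,
`Φ(0,p) = p`, `Φ(q,0) = ∞` for `q > 0`. -/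
noncomputable def PhiE (q p : ℝ) : ℝ≥0∞ :=
  if q = 0 then ENNReal.ofReal p
  else if p = 0 then ⊤
  else ENNReal.ofReal (q * Real.log (q / p) - (q - p))

/-- A self-avoiding oriented cycle in the graph `(V, E)`. -/
structure SACycle (V : Type*) (E : Set (V × V)) where
  n : ℕ
  c : Fin (n + 1) → V
  inj : Function.Injective c
  mem : ∀ i : Fin (n + 1), (c i, c (i + 1)) ∈ E

lemma phi_nonneg_aux17 {q p : ℝ} (hq : 0 < q) (hp : 0 < p) :
    0 ≤ q * Real.log (q / p) - (q - p) := by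
  have h := Real.log_le_sub_one_of_pos (div_pos hp hq)
  have hlog : Real.log (p / q) = - Real.log (q / p) := by
    rw [← Real.log_inv, inv_div]
  rw [hlog] at h
  have h2 : 1 - p / q ≤ Real.log (q / p) := by linarith
  have h3 : q * (1 - p / q) ≤ q * Real.log (q / p) :=
    mul_le_mul_of_nonneg_left h2 hq.le
  have h4 : q * (1 - p / q) = q - p := by field_simp
  linarith

lemma PhiE_pos_pos_aux17 {q p : ℝ} (hq : 0 < q) (hp : 0 < p) :
    PhiE q p = ENNReal.ofReal (q * Real.log (q / p) - (q - p)) := by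
  simp [PhiE, hq.ne', hp.ne']

lemma phi_hasDerivAt_aux17 {q p : ℝ} (hq : 0 < q) (hp : 0 < p) :
    HasDerivAt (fun α => (q + α) * Real.log ((q + α) / p) - ((q + α) - p))
      (Real.log (q / p)) 0 := by
  have h1 : HasDerivAt (fun α : ℝ => q + α) 1 0 := (hasDerivAt_id 0).const_add q
  have h2 : HasDerivAt (fun α : ℝ => (q + α) / p) (1 / p) 0 := h1.div_const p
  have h3 : HasDerivAt (fun α : ℝ => Real.log ((q + α) / p))
      ((1 / p) / ((q + 0) / p)) 0 := h2.log (div_ne_zero (by linarith) hp.ne')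
  have h4 := (h1.mul h3).sub (h1.sub_const p)
  have hqp : q * (1 / p / (q / p)) = 1 := by field_simp
  have e : Real.log (q / p) = 1 * Real.log ((q + 0) / p) + (q + 0) * (1 / p / ((q + 0) / p)) - 1 := by
    simp only [add_zero, one_mul]
    rw [hqp]
    ring
  rw [e]
  exact h4

theorem stmt_17 (V : Type*) [Fintype V] (E : Set (V × V))
    (hE : ∀ x : V, (x, x) ∉ E)
    (μ : V → ℝ) (hμ0 : ∀ x, 0 ≤ μ x)
    (r : V → V → ℝ) (hr0 : ∀ y z, 0 ≤ r y z)
    (Q : V → V → ℝ) (hQ0 : ∀ y z, 0 ≤ Q y z)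
    (hQsupp : ∀ y z, (y, z) ∉ E → Q y z = 0)
    (hQdiv : ∀ y : V, (∑ z : V, Q y z) = ∑ z : V, Q z y)
    (hmin : ∀ Q' : V → V → ℝ, (∀ y z, 0 ≤ Q' y z) →
      (∀ y z, (y, z) ∉ E → Q' y z = 0) →
      (∀ y : V, (∑ z : V, Q' y z) = ∑ z : V, Q' z y) →
      (∑ y : V, ∑ z : V, PhiE (Q y z) (μ y * r y z)) ≤
        ∑ y : V, ∑ z : V, PhiE (Q' y z) (μ y * r y z))
    (C : SACycle V E) (hCpos : ∀ i : Fin (C.n + 1), 0 < Q (C.c i) (C.c (i + 1))) :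
    (∑ i : Fin (C.n + 1),
      Real.log (Q (C.c i) (C.c (i + 1)) / (μ (C.c i) * r (C.c i) (C.c (i + 1))))) = 0 := by
  classical
  set q : Fin (C.n + 1) → ℝ := fun i => Q (C.c i) (C.c (i + 1)) with hqdef
  set p : Fin (C.n + 1) → ℝ := fun i => μ (C.c i) * r (C.c i) (C.c (i + 1)) with hpdef
  -- total sum is finite
  have hzero := hmin (fun _ _ => 0) (fun _ _ => le_refl 0) (fun _ _ _ => rfl) (fun _ => rfl)
  have htot : (∑ y : V, ∑ z : V, PhiE (Q y z) (μ y * r y z)) ≠ ⊤ := by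
    refine ne_top_of_le_ne_top ?_ hzero
    simp only [PhiE, if_pos rfl]
    exact (ENNReal.sum_lt_top.2 fun y _ =>
      (ENNReal.sum_lt_top.2 fun z _ => ENNReal.ofReal_lt_top)).ne
  have hterm : ∀ y z, PhiE (Q y z) (μ y * r y z) ≠ ⊤ := by
    intro y z
    refine ne_top_of_le_ne_top htot ?_
    exact le_trans
      (Finset.single_le_sum (f := fun z => PhiE (Q y z) (μ y * r y z))
        (fun _ _ => zero_le) (Finset.mem_univ z))
      (Finset.single_le_sum (f := fun y => ∑ z, PhiE (Q y z) (μ y * r y z))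
        (fun _ _ => zero_le) (Finset.mem_univ y))
  have hppos : ∀ i, 0 < p i := by
    intro i
    rcases lt_or_eq_of_le (mul_nonneg (hμ0 _) (hr0 _ _)) with h | h
    · exact h
    · exfalso
      apply hterm (C.c i) (C.c (i + 1))
      simp [PhiE, (hCpos i).ne', ← h]
  -- the set of cycle edges
  set T : Finset (V × V) :=
    Finset.image (fun i : Fin (C.n + 1) => (C.c i, C.c (i + 1))) Finset.univ with hTdef
  have hinj : Function.Injective (fun i : Fin (C.n + 1) => (C.c i, C.c (i + 1))) :=
    fun i j h => C.inj (congrArg Prod.fst h)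
  have hSsplit : ∀ Q'' : V → V → ℝ,
      (∑ y : V, ∑ z : V, PhiE (Q'' y z) (μ y * r y z))
        = (∑ i : Fin (C.n + 1), PhiE (Q'' (C.c i) (C.c (i + 1))) (p i))
          + ∑ e ∈ Finset.univ \ T, PhiE (Q'' e.1 e.2) (μ e.1 * r e.1 e.2) := by
    intro Q''
    have h1 : (∑ y : V, ∑ z : V, PhiE (Q'' y z) (μ y * r y z))
        = ∑ e : V × V, PhiE (Q'' e.1 e.2) (μ e.1 * r e.1 e.2) := by
      rw [← Finset.univ_product_univ, Finset.sum_product]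
    rw [h1, ← Finset.sum_sdiff (Finset.subset_univ T), add_comm]
    congr 1
    rw [hTdef, Finset.sum_image (fun i _ j _ h => hinj h)]
  have hRne : (∑ e ∈ Finset.univ \ T, PhiE (Q e.1 e.2) (μ e.1 * r e.1 e.2)) ≠ ⊤ :=
    (ENNReal.sum_lt_top.2 fun e _ => (hterm e.1 e.2).lt_top).ne
  -- key inequality from minimality
  have hkey : ∀ α : ℝ, (∀ i, 0 ≤ q i + α) →
      (∑ i : Fin (C.n + 1), PhiE (q i) (p i)) ≤
        ∑ i : Fin (C.n + 1), PhiE (q i + α) (p i) := by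
    intro α hα
    set Qa : V → V → ℝ := fun y z =>
      Q y z + ∑ i : Fin (C.n + 1), if C.c i = y ∧ C.c (i + 1) = z then α else 0 with hQadef
    have hQaedge : ∀ i, Qa (C.c i) (C.c (i + 1)) = q i + α := by
      intro i
      have he : ∀ j : Fin (C.n + 1),
          (if C.c j = C.c i ∧ C.c (j + 1) = C.c (i + 1) then α else 0)
            = if j = i then α else 0 := by
        intro j
        by_cases h : j = i
        · subst h; simp
        · have : ¬(C.c j = C.c i ∧ C.c (j + 1) = C.c (i + 1)) :=
            fun hc => h (C.inj hc.1)
          simp [h, this]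
      simp only [hQadef, he]
      simp [hqdef]
    have hQaoff : ∀ y z, (¬ ∃ i, C.c i = y ∧ C.c (i + 1) = z) → Qa y z = Q y z := by
      intro y z h
      simp only [hQadef]
      rw [Finset.sum_eq_zero (fun i _ => if_neg (fun hc => h ⟨i, hc⟩)), add_zero]
    have h1 : ∀ y z, 0 ≤ Qa y z := by
      intro y z
      by_cases h : ∃ i, C.c i = y ∧ C.c (i + 1) = z
      · obtain ⟨i, hi1, hi2⟩ := h
        rw [← hi1, ← hi2, hQaedge i]; exact hα i
      · rw [hQaoff y z h]; exact hQ0 y z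
    have h2 : ∀ y z, (y, z) ∉ E → Qa y z = 0 := by
      intro y z hyz
      rw [hQaoff y z (fun ⟨i, hi1, hi2⟩ => hyz (hi1 ▸ hi2 ▸ C.mem i))]
      exact hQsupp y z hyz
    have h3 : ∀ y : V, (∑ z : V, Qa y z) = ∑ z : V, Qa z y := by
      intro y
      simp only [hQadef, Finset.sum_add_distrib]
      have t1 : (∑ z : V, ∑ i : Fin (C.n + 1),
          if C.c i = y ∧ C.c (i + 1) = z then α else 0)
          = ∑ i : Fin (C.n + 1), if C.c i = y then α else 0 := by
        rw [Finset.sum_comm]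
        refine Finset.sum_congr rfl fun i _ => ?_
        by_cases h : C.c i = y <;> simp [h]
      have t2 : (∑ z : V, ∑ i : Fin (C.n + 1),
          if C.c i = z ∧ C.c (i + 1) = y then α else 0)
          = ∑ i : Fin (C.n + 1), if C.c (i + 1) = y then α else 0 := by
        rw [Finset.sum_comm]
        refine Finset.sum_congr rfl fun i _ => ?_
        by_cases h : C.c (i + 1) = y <;> simp [h]
      have t3 : (∑ i : Fin (C.n + 1), if C.c (i + 1) = y then α else 0)
          = ∑ i : Fin (C.n + 1), if C.c i = y then α else 0 :=
        Fintype.sum_equiv (Equiv.addRight (1 : Fin (C.n + 1)))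
          (fun i => if C.c (i + 1) = y then α else 0)
          (fun j => if C.c j = y then α else 0) (fun i => rfl)
      rw [t1, t2, t3, hQdiv y]
    have hle := hmin Qa h1 h2 h3
    rw [hSsplit Q, hSsplit Qa] at hle
    have hRR : (∑ e ∈ Finset.univ \ T, PhiE (Qa e.1 e.2) (μ e.1 * r e.1 e.2))
        = ∑ e ∈ Finset.univ \ T, PhiE (Q e.1 e.2) (μ e.1 * r e.1 e.2) := by
      refine Finset.sum_congr rfl fun e he => ?_
      have heT : e ∉ T := (Finset.mem_sdiff.1 he).2
      have : ¬ ∃ i, C.c i = e.1 ∧ C.c (i + 1) = e.2 := by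
        rintro ⟨i, hi1, hi2⟩
        exact heT (Finset.mem_image.2 ⟨i, Finset.mem_univ i, by rw [hi1, hi2]⟩)
      rw [hQaoff e.1 e.2 this]
    rw [hRR] at hle
    simp only [hQaedge] at hle
    calc (∑ i : Fin (C.n + 1), PhiE (q i) (p i))
        = ∑ i : Fin (C.n + 1), PhiE (Q (C.c i) (C.c (i + 1))) (p i) := rfl
      _ ≤ ∑ i : Fin (C.n + 1), PhiE (q i + α) (p i) :=
          (ENNReal.add_le_add_iff_right hRne).mp hle
  -- positivity radius
  have hne : (Finset.univ : Finset (Fin (C.n + 1))).Nonempty := Finset.univ_nonempty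
  set m : ℝ := Finset.univ.inf' hne q with hmdef
  have hm : 0 < m := (Finset.lt_inf'_iff hne).2 fun i _ => hCpos i
  -- real objective
  set g : ℝ → ℝ := fun α =>
    ∑ i : Fin (C.n + 1), ((q i + α) * Real.log ((q i + α) / p i) - ((q i + α) - p i))
    with hgdef
  have hgle : ∀ α : ℝ, |α| < m → g 0 ≤ g α := by
    intro α hα
    have hqa : ∀ i, 0 < q i + α := by
      intro i
      have : m ≤ q i := Finset.inf'_le q (Finset.mem_univ i)
      have := abs_lt.1 hα
      linarith
    have hk := hkey α (fun i => (hqa i).le)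
    have e1 : (∑ i : Fin (C.n + 1), PhiE (q i) (p i))
        = ENNReal.ofReal (g 0) := by
      rw [hgdef]
      simp only [add_zero]
      rw [ENNReal.ofReal_sum_of_nonneg (fun i _ => phi_nonneg_aux17 (hCpos i) (hppos i))]
      exact Finset.sum_congr rfl fun i _ => PhiE_pos_pos_aux17 (hCpos i) (hppos i)
    have e2 : (∑ i : Fin (C.n + 1), PhiE (q i + α) (p i))
        = ENNReal.ofReal (g α) := by
      rw [hgdef]
      rw [ENNReal.ofReal_sum_of_nonneg (fun i _ => phi_nonneg_aux17 (hqa i) (hppos i))]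
      exact Finset.sum_congr rfl fun i _ => PhiE_pos_pos_aux17 (hqa i) (hppos i)
    rw [e1, e2] at hk
    have hg0 : 0 ≤ g 0 :=
      Finset.sum_nonneg fun i _ => by
        simpa using phi_nonneg_aux17 (hCpos i) (hppos i)
    exact (ENNReal.ofReal_le_ofReal_iff
      (Finset.sum_nonneg fun i _ => phi_nonneg_aux17 (hqa i) (hppos i))).1 hk
  have hloc : IsLocalMin g 0 := by
    have hball : Metric.ball (0 : ℝ) m ∈ nhds (0 : ℝ) := Metric.ball_mem_nhds 0 hm
    refine Filter.eventually_of_mem hball fun α hα => ?_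
    exact hgle α (by simpa [Real.dist_eq] using hα)
  have hderiv : HasDerivAt g
      (∑ i : Fin (C.n + 1), Real.log (q i / p i)) 0 :=
    HasDerivAt.fun_sum fun i _ => phi_hasDerivAt_aux17 (hCpos i) (hppos i)
  exact hloc.hasDerivAt_eq_zero hderiv
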